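/- Let v = (5/8, 7/10, 1), F1 = (3/5, 1/2, 1/2), F2 = (4/5, 4/5, 1/2), q = 3/10. Suppose a policy pair (π¹, π²) of probability vectors satisfies, for some V_s ∈ (5/8, 1) and α ∈ ℝ: Σᵢ vᵢ π¹ᵢ = Σᵢ vᵢ π²ᵢ = V_s + α, and Σᵢ (vᵢ − V_s)·F1ᵢ·π¹ᵢ = 0, and Σᵢ (vᵢ − V_s)·F2ᵢ·π²ᵢ = 0. Then the expected revenue satisfies q·Σᵢ vᵢ F1ᵢ π¹ᵢ + (1−q)·Σᵢ vᵢ F2ᵢ π²ᵢ = (71/100)·V_s + ((100 − 142·V_s)/(25·(8V_s − 5)·(1 − V_s)))·V_s·α. -/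

import Mathlib

/-- Closed-form revenue parametrization: a policy pair with expected proposed
price `V_s + α` in both groups and expected accepted price `V_s` in both groups
has revenue
`(71/100)·V_s + ((100 − 142 V_s)/(25 (8V_s − 5)(1 − V_s)))·V_s·α`. -/
theorem stmt_12 (a1 a2 a3 b1 b2 b3 Vs α : ℝ)
    (ha1 : 0 ≤ a1) (ha2 : 0 ≤ a2) (ha3 : 0 ≤ a3) (hasum : a1 + a2 + a3 = 1)
    (hb1 : 0 ≤ b1) (hb2 : 0 ≤ b2) (hb3 : 0 ≤ b3) (hbsum : b1 + b2 + b3 = 1)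
    (hVs1 : 5/8 < Vs) (hVs2 : Vs < 1)
    (hprop1 : (5/8) * a1 + (7/10) * a2 + 1 * a3 = Vs + α)
    (hprop2 : (5/8) * b1 + (7/10) * b2 + 1 * b3 = Vs + α)
    (hacc1 : (5/8 - Vs) * (3/5) * a1 + (7/10 - Vs) * (1/2) * a2 + (1 - Vs) * (1/2) * a3 = 0)
    (hacc2 : (5/8 - Vs) * (4/5) * b1 + (7/10 - Vs) * (4/5) * b2 + (1 - Vs) * (1/2) * b3 = 0) :
    (3/10) * ((5/8) * (3/5) * a1 + (7/10) * (1/2) * a2 + 1 * (1/2) * a3)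
      + (1 - 3/10) * ((5/8) * (4/5) * b1 + (7/10) * (4/5) * b2 + 1 * (1/2) * b3)
      = (71/100) * Vs + ((100 - 142 * Vs) / (25 * (8 * Vs - 5) * (1 - Vs))) * Vs * α := by
  have h5 : (8 * Vs - 5) ≠ 0 := by nlinarith
  have h1 : (1 - Vs) ≠ 0 := by nlinarith
  have hD : (8 * Vs - 5) * (1 - Vs) ≠ 0 := mul_ne_zero h5 h1
  have key : ((3/10) * ((5/8) * (3/5) * a1 + (7/10) * (1/2) * a2 + 1 * (1/2) * a3)
      + (1 - 3/10) * ((5/8) * (4/5) * b1 + (7/10) * (4/5) * b2 + 1 * (1/2) * b3))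
        * ((8 * Vs - 5) * (1 - Vs))
      = (71/100) * Vs * ((8 * Vs - 5) * (1 - Vs)) + ((100 - 142 * Vs)/25) * Vs * α := by
    linear_combination (3/10) * ((-(5/2) * Vs * (1 - Vs)) * hasum + (4 * Vs * (1 - Vs)) * hprop1
          + (-5 * (1 - Vs)) * hacc1)
        + (7/10) * (((4/5) * Vs * (8 * Vs - 5)) * hbsum
          + (-(4/5) * Vs * (8 * Vs - 5)) * hprop2 + (8 * Vs - 5) * hacc2)
  have expand : ((71/100) * Vs + ((100 - 142 * Vs) / (25 * (8 * Vs - 5) * (1 - Vs))) * Vs * α)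
        * ((8 * Vs - 5) * (1 - Vs))
      = (71/100) * Vs * ((8 * Vs - 5) * (1 - Vs)) + ((100 - 142 * Vs)/25) * Vs * α := by
    rw [div_eq_mul_inv (100 - 142 * Vs), mul_inv, mul_inv]
    linear_combination (100 - 142 * Vs) / 25 * Vs * α * (((1 - Vs) * (1 - Vs)⁻¹) * mul_inv_cancel₀ h5 + mul_inv_cancel₀ h1)
  exact mul_right_cancel₀ hD (key.trans expand.symm)
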